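/- For Lebesgue almost every m×n real matrix Y, the Diophantine exponent ω(Y) equals n/m. -/

import Mathlib

open Matrix MeasureTheory Filter Set
open scoped ENNReal

namespace AeOmega

lemma round_min (x : ℝ) (p : ℤ) : |x - (round x : ℝ)| ≤ |x - (p : ℝ)| := by
  rcases le_or_gt (1/2 : ℝ) |x - (p:ℝ)| with h | h
  · exact (abs_sub_round x).trans h
  · have hp : p = round x := by
      have h1 : |(round x : ℝ) - (p : ℝ)| < 1 := by
        calc |(round x : ℝ) - p| ≤ |(round x:ℝ) - x| + |x - p| := by
              simpa using abs_sub_le ((round x : ℝ)) x p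
        _ < 1/2 + 1/2 := by
              refine add_lt_add_of_le_of_lt ?_ h
              rw [abs_sub_comm]; exact abs_sub_round x
        _ = 1 := by norm_num
      have : |((round x - p : ℤ) : ℝ)| < 1 := by push_cast; exact h1
      have h2 : |round x - p| < 1 := by exact_mod_cast this
      rw [abs_lt] at h2; omega
    rw [hp]

lemma floor_eq_abs_lt {u v : ℝ} (h : ⌊u⌋ = ⌊v⌋) : |u - v| < 1 := by
  have h1 := Int.floor_le u
  have h2 := Int.lt_floor_add_one u
  have h3 := Int.floor_le v
  have h4 := Int.lt_floor_add_one v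
  rw [h] at h1 h2
  rw [abs_lt]; constructor <;> linarith


lemma oneDim (a : ℤ) (ha : a ≠ 0) (c t0 ε : ℝ) (hε : 0 < ε) (hε2 : ε ≤ 1/2) :
    volume {t : ℝ | t ∈ Set.Ico t0 (t0+1) ∧ ∃ p : ℤ, |t * (a:ℝ) + c - (p:ℝ)| < ε}
      ≤ ENNReal.ofReal (10 * ε) := by
  have haR : (0:ℝ) < |(a:ℝ)| := by
    simpa using abs_pos.mpr (show ((a:ℝ)) ≠ 0 by exact_mod_cast ha)
  set r : ℝ := t0 * a + c with hr
  set F : Finset ℤ := Finset.Icc (⌈r⌉ - |a| - 1) (⌊r⌋ + |a| + 1) with hF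
  have hsub : {t : ℝ | t ∈ Set.Ico t0 (t0+1) ∧ ∃ p : ℤ, |t * (a:ℝ) + c - (p:ℝ)| < ε}
      ⊆ ⋃ p ∈ F, Metric.ball (((p:ℝ) - c)/a) (ε / |(a:ℝ)|) := by
    rintro t ⟨⟨ht0, ht1⟩, p, hp⟩
    have hdist : |(p:ℝ) - r| ≤ |(a:ℝ)| + 1 := by
      have e1 : (p:ℝ) - r = ((p:ℝ) - (t * a + c)) + (t - t0) * a := by ring
      have e2 : |(p:ℝ) - (t*a+c)| < ε := by rw [abs_sub_comm]; exact hp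
      have e3 : |(t - t0) * (a:ℝ)| ≤ |(a:ℝ)| := by
        rw [abs_mul]
        have : |t - t0| ≤ 1 := by rw [abs_le]; constructor <;> linarith
        nlinarith [abs_nonneg ((a:ℝ))]
      calc |(p:ℝ) - r| ≤ |(p:ℝ) - (t*a+c)| + |(t - t0) * (a:ℝ)| := by
            rw [e1]; exact abs_add_le _ _
      _ ≤ |(a:ℝ)| + 1 := by linarith
    have hmemF : p ∈ F := by
      rw [hF, Finset.mem_Icc]
      rw [abs_le] at hdist
      have habs : ((|a| : ℤ) : ℝ) = |(a:ℝ)| := by push_cast; rfl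
      constructor
      · have : r ≤ (p:ℝ) + |(a:ℝ)| + 1 := by linarith
        have h2 : ⌈r⌉ ≤ p + |a| + 1 := by
          rw [Int.ceil_le]; push_cast [habs]; linarith
        omega
      · have : (p:ℝ) ≤ r + (|(a:ℝ)| + 1) := by linarith
        have h2 : p - |a| - 1 ≤ ⌊r⌋ := by
          rw [Int.le_floor]; push_cast [habs]; linarith
        omega
    refine Set.mem_iUnion₂.2 ⟨p, hmemF, ?_⟩
    rw [Metric.mem_ball, Real.dist_eq]
    have e4 : t - ((p:ℝ) - c)/a = (t * a + c - p)/a := by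
      field_simp
      ring
    rw [e4, abs_div]
    rw [div_lt_div_iff_of_pos_right haR]
    exact hp
  have hcard : F.card ≤ 5 * a.natAbs := by
    have h1 : F.card = ((⌊r⌋ + |a| + 1) + 1 - (⌈r⌉ - |a| - 1)).toNat := Int.card_Icc _ _
    have h2 : ⌊r⌋ ≤ ⌈r⌉ := Int.floor_le_ceil r
    have h3 : (1:ℤ) ≤ |a| := Int.one_le_abs (by omega)
    have h4 : |a| = (a.natAbs : ℤ) := Int.abs_eq_natAbs a
    omega
  have hone : ∀ p : ℤ, volume (Metric.ball (((p:ℝ) - c)/a) (ε / |(a:ℝ)|))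
      = ENNReal.ofReal (2 * (ε / |(a:ℝ)|)) := fun p => by
    rw [Real.volume_ball]
  calc volume {t : ℝ | t ∈ Set.Ico t0 (t0+1) ∧ ∃ p : ℤ, |t * (a:ℝ) + c - (p:ℝ)| < ε}
      ≤ volume (⋃ p ∈ F, Metric.ball (((p:ℝ) - c)/a) (ε / |(a:ℝ)|)) := measure_mono hsub
  _ ≤ ∑ p ∈ F, volume (Metric.ball (((p:ℝ) - c)/a) (ε / |(a:ℝ)|)) :=
      measure_biUnion_finset_le F _
  _ = F.card * ENNReal.ofReal (2 * (ε / |(a:ℝ)|)) := by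
      simp only [hone, Finset.sum_const, nsmul_eq_mul]
  _ ≤ (5 * a.natAbs : ℕ) * ENNReal.ofReal (2 * (ε / |(a:ℝ)|)) := by
      exact mul_le_mul_left (by exact_mod_cast hcard) _
  _ = ENNReal.ofReal (10 * ε) := by
      rw [show ((5 * a.natAbs : ℕ) : ℝ≥0∞) = ENNReal.ofReal ((5 * a.natAbs : ℕ):ℝ) from
        (ENNReal.ofReal_natCast _).symm, ← ENNReal.ofReal_mul (by positivity)]
      congr 1
      have h5 : ((a.natAbs : ℕ) : ℝ) = |(a:ℝ)| := by
        rw [Nat.cast_natAbs, Int.cast_abs]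
      push_cast
      rw [h5]
      field_simp
      ring


lemma rowDim {n : ℕ} (q : Fin (n+1) → ℤ) (hq : q ≠ 0) (w : Fin (n+1) → ℤ) {ε : ℝ} (hε : 0 < ε) :
    volume ((Set.univ.pi fun j => Set.Ico ((w j : ℝ)) ((w j : ℝ) + 1)) ∩
      ⋃ p : ℤ, {y : Fin (n+1) → ℝ | |(∑ j, y j * (q j : ℝ)) - (p:ℝ)| < ε})
      ≤ ENNReal.ofReal (10 * ε) := by
  have hcube_meas : MeasurableSet (Set.univ.pi fun j : Fin (n+1) =>
      Set.Ico ((w j : ℝ)) ((w j : ℝ) + 1)) :=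
    MeasurableSet.univ_pi fun j => measurableSet_Ico
  have hcont : Measurable fun y : Fin (n+1) → ℝ => ∑ j, y j * (q j : ℝ) :=
    Finset.measurable_sum _ (fun j _ => (measurable_pi_apply j).mul_const _)
  have hop : ∀ p : ℤ, MeasurableSet {y : Fin (n+1) → ℝ | |(∑ j, y j * (q j:ℝ)) - (p:ℝ)| < ε} := by
    intro p
    have he : {y : Fin (n+1) → ℝ | |(∑ j, y j * (q j:ℝ)) - (p:ℝ)| < ε}
        = (fun y : Fin (n+1) → ℝ => ∑ j, y j * (q j:ℝ)) ⁻¹' Metric.ball (p:ℝ) ε := by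
      ext y; simp [Metric.mem_ball, Real.dist_eq]
    rw [he]
    exact hcont measurableSet_ball
  have hmeas : MeasurableSet ((Set.univ.pi fun j : Fin (n+1) => Set.Ico ((w j : ℝ)) ((w j : ℝ) + 1)) ∩
      ⋃ p : ℤ, {y : Fin (n+1) → ℝ | |(∑ j, y j * (q j : ℝ)) - (p:ℝ)| < ε}) :=
    hcube_meas.inter (MeasurableSet.iUnion hop)
  rcases le_or_gt (1/2 : ℝ) ε with hhalf | hhalf
  · calc volume ((Set.univ.pi fun j : Fin (n+1) => Set.Ico ((w j : ℝ)) ((w j : ℝ) + 1)) ∩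
        ⋃ p : ℤ, {y : Fin (n+1) → ℝ | |(∑ j, y j * (q j : ℝ)) - (p:ℝ)| < ε})
        ≤ volume (Set.univ.pi fun j : Fin (n+1) => Set.Ico ((w j : ℝ)) ((w j : ℝ) + 1)) :=
        measure_mono Set.inter_subset_left
    _ = 1 := by
        rw [volume_pi_pi]
        simp [Real.volume_Ico]
    _ ≤ ENNReal.ofReal (10 * ε) := ENNReal.one_le_ofReal.mpr (by linarith)
  · obtain ⟨j0, hj0⟩ : ∃ j, q j ≠ 0 := by
      by_contra h; push_neg at h; exact hq (funext fun j => h j)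
    set S := ((Set.univ.pi fun j : Fin (n+1) => Set.Ico ((w j : ℝ)) ((w j : ℝ) + 1)) ∩
      ⋃ p : ℤ, {y : Fin (n+1) → ℝ | |(∑ j, y j * (q j : ℝ)) - (p:ℝ)| < ε}) with hS
    set e := MeasurableEquiv.piFinSuccAbove (fun _ : Fin (n+1) => ℝ) j0 with he
    have hpres := (volume_preserving_piFinSuccAbove (fun _ : Fin (n+1) => ℝ) j0).symm
    have h1 : volume S = volume (e.symm ⁻¹' S) := (hpres.measure_preimage hmeas.nullMeasurableSet).symm
    set rest := (Set.univ.pi fun j' : Fin n =>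
      Set.Ico ((w (j0.succAbove j') : ℝ)) ((w (j0.succAbove j') : ℝ) + 1)) with hrest
    have hrest_meas : MeasurableSet rest := MeasurableSet.univ_pi fun j' => measurableSet_Ico
    have hkey : ∀ y' : Fin n → ℝ,
        volume ((fun t => (t, y')) ⁻¹' (e.symm ⁻¹' S))
          ≤ rest.indicator (fun _ => ENNReal.ofReal (10 * ε)) y' := by
      intro y'
      by_cases hy' : y' ∈ rest
      · rw [Set.indicator_of_mem hy']
        have hsub2 : ((fun t => (t, y')) ⁻¹' (e.symm ⁻¹' S)) ⊆
            {t : ℝ | t ∈ Set.Ico ((w j0 : ℝ)) ((w j0 : ℝ)+1) ∧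
              ∃ p : ℤ, |t * (q j0 : ℝ) + (∑ j', y' j' * (q (j0.succAbove j') : ℝ)) - (p:ℝ)| < ε} := by
          intro t ht
          simp only [Set.mem_preimage] at ht
          have hins : e.symm (t, y') = Fin.insertNth j0 t y' := rfl
          rw [hins] at ht
          obtain ⟨hcube, hball⟩ := ht
          constructor
          · have := hcube j0 (Set.mem_univ j0)
            simpa using this
          · obtain ⟨_, ⟨p, rfl⟩, hmem⟩ := hball
            refine ⟨p, ?_⟩
            have hsum : (∑ j, Fin.insertNth (α := fun _ => ℝ) j0 t y' j * (q j : ℝ))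
                = t * (q j0 : ℝ) + ∑ j', y' j' * (q (j0.succAbove j') : ℝ) := by
              rw [Fin.sum_univ_succAbove (fun j => Fin.insertNth (α := fun _ => ℝ) j0 t y' j * (q j : ℝ)) j0]
              simp
            rw [Set.mem_setOf_eq, hsum] at hmem
            exact hmem
        calc volume ((fun t => (t, y')) ⁻¹' (e.symm ⁻¹' S)) ≤ _ := measure_mono hsub2
        _ ≤ ENNReal.ofReal (10 * ε) :=
            oneDim (q j0) hj0 _ _ ε hε hhalf.le
      · rw [Set.indicator_of_notMem hy']
        have : ((fun t => (t, y')) ⁻¹' (e.symm ⁻¹' S)) = ∅ := by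
          ext t
          simp only [Set.mem_preimage, Set.mem_empty_iff_false, iff_false]
          intro ht
          have hins : e.symm (t, y') = Fin.insertNth j0 t y' := rfl
          rw [hins] at ht
          apply hy'
          intro j' _
          have := ht.1 (j0.succAbove j') (Set.mem_univ (j0.succAbove j'))
          simpa using this
        rw [this]
        simp
    have h2 : volume (e.symm ⁻¹' S) = ∫⁻ y', volume ((fun t => (t, y')) ⁻¹' (e.symm ⁻¹' S)) := by
      exact Measure.prod_apply_symm (e.symm.measurable hmeas)
    rw [h1, h2]
    calc (∫⁻ y', volume ((fun t => (t, y')) ⁻¹' (e.symm ⁻¹' S)))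
        ≤ ∫⁻ y', rest.indicator (fun _ => ENNReal.ofReal (10 * ε)) y' := lintegral_mono hkey
    _ = ENNReal.ofReal (10 * ε) * volume rest := by
        rw [lintegral_indicator hrest_meas, setLIntegral_const]
    _ = ENNReal.ofReal (10 * ε) := by
        rw [hrest, volume_pi_pi]
        simp [Real.volume_Ico]



lemma cubeDim {m n : ℕ} (q : Fin n → ℤ) (hq : q ≠ 0) (z : Fin m → Fin n → ℤ)
    {ε : ℝ} (hε : 0 < ε) :
    volume ({Y : Fin m → Fin n → ℝ | ∃ p : Fin m → ℤ,
        ‖(Matrix.of Y).mulVec (fun j => (q j : ℝ)) - fun i => (p i : ℝ)‖ < ε}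
      ∩ Set.univ.pi fun i => Set.univ.pi fun j => Set.Ico ((z i j : ℝ)) ((z i j : ℝ) + 1))
      ≤ (ENNReal.ofReal (10 * ε))^m := by
  obtain ⟨n', rfl⟩ : ∃ n'', n = n'' + 1 := by
    cases n with
    | zero => exact absurd (funext fun j => j.elim0) hq
    | succ k => exact ⟨k, rfl⟩
  have hsub : ({Y : Fin m → Fin (n'+1) → ℝ | ∃ p : Fin m → ℤ,
        ‖(Matrix.of Y).mulVec (fun j => (q j : ℝ)) - fun i => (p i : ℝ)‖ < ε}
      ∩ Set.univ.pi fun i => Set.univ.pi fun j => Set.Ico ((z i j : ℝ)) ((z i j : ℝ) + 1))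
      ⊆ Set.univ.pi fun i : Fin m =>
        ((Set.univ.pi fun j => Set.Ico ((z i j : ℝ)) ((z i j : ℝ) + 1)) ∩
          ⋃ p : ℤ, {y : Fin (n'+1) → ℝ | |(∑ j, y j * (q j : ℝ)) - (p:ℝ)| < ε}) := by
    rintro Y ⟨⟨p, hp⟩, hcube⟩
    intro i _
    refine ⟨hcube i (Set.mem_univ i), ?_⟩
    refine Set.mem_iUnion.2 ⟨p i, ?_⟩
    have h1 : |((Matrix.of Y).mulVec (fun j => (q j : ℝ)) - fun i => (p i : ℝ)) i| ≤
        ‖(Matrix.of Y).mulVec (fun j => (q j : ℝ)) - fun i => (p i : ℝ)‖ := by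
      simpa [Real.norm_eq_abs] using
        norm_le_pi_norm ((Matrix.of Y).mulVec (fun j => (q j : ℝ)) - fun i => (p i : ℝ)) i
    have h2 : ((Matrix.of Y).mulVec (fun j => (q j : ℝ)) - fun i => (p i : ℝ)) i
        = (∑ j, Y i j * (q j : ℝ)) - (p i : ℝ) := by
      simp [Matrix.mulVec, dotProduct]
    rw [h2] at h1
    exact Set.mem_setOf_eq ▸ lt_of_le_of_lt h1 hp
  calc volume ({Y : Fin m → Fin (n'+1) → ℝ | ∃ p : Fin m → ℤ,
        ‖(Matrix.of Y).mulVec (fun j => (q j : ℝ)) - fun i => (p i : ℝ)‖ < ε}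
      ∩ Set.univ.pi fun i => Set.univ.pi fun j => Set.Ico ((z i j : ℝ)) ((z i j : ℝ) + 1))
      ≤ volume (Set.univ.pi fun i : Fin m =>
        ((Set.univ.pi fun j => Set.Ico ((z i j : ℝ)) ((z i j : ℝ) + 1)) ∩
          ⋃ p : ℤ, {y : Fin (n'+1) → ℝ | |(∑ j, y j * (q j : ℝ)) - (p:ℝ)| < ε})) :=
      measure_mono hsub
  _ = ∏ i : Fin m, volume
        ((Set.univ.pi fun j => Set.Ico ((z i j : ℝ)) ((z i j : ℝ) + 1)) ∩
          ⋃ p : ℤ, {y : Fin (n'+1) → ℝ | |(∑ j, y j * (q j : ℝ)) - (p:ℝ)| < ε}) :=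
      volume_pi_pi _
  _ ≤ ∏ _i : Fin m, ENNReal.ofReal (10 * ε) :=
      Finset.prod_le_prod' fun i _ => rowDim q hq (z i) hε
  _ = (ENNReal.ofReal (10 * ε))^m := by simp

lemma tsum_pi_prod (n : ℕ) (f : ℤ → ℝ≥0∞) :
    ∑' q : Fin n → ℤ, ∏ j, f (q j) = (∑' k : ℤ, f k)^n := by
  induction n with
  | zero =>
      haveI : Unique (Fin 0 → ℤ) := ⟨⟨fun i => i.elim0⟩, fun q => funext fun i => i.elim0⟩
      rw [tsum_eq_single default (fun b hb => absurd (Subsingleton.elim b default) hb)]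
      simp
  | succ n ih =>
      rw [← (Fin.consEquiv (fun _ : Fin (n+1) => ℤ)).tsum_eq, ENNReal.tsum_prod']
      have h1 : ∀ (x : ℤ) (q : Fin n → ℤ),
          (∏ j, f ((Fin.consEquiv (fun _ : Fin (n+1) => ℤ)) (x, q) j))
            = f x * ∏ j, f (q j) := by
        intro x q
        rw [Fin.prod_univ_succ]
        simp [Fin.consEquiv]
      simp_rw [h1, ENNReal.tsum_mul_left, ENNReal.tsum_mul_right, ih]
      rw [pow_succ]
      ring

lemma summable_int_max (r : ℝ) (hr : 1 < r) :
    Summable (fun k : ℤ => (max 1 |(k:ℝ)|) ^ (-r)) := by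
  have hf := Real.summable_abs_int_rpow hr
  refine Summable.of_nonneg_of_le (fun k => by positivity) (fun k => ?_)
    ((hf.add (summable_of_ne_finset_zero (s := {0}) fun k hk => by
      simp at hk; simp [hk])) :
      Summable (fun k : ℤ => |(k:ℝ)| ^ (-r) + (if k = 0 then (1:ℝ) else 0)))
  · by_cases hk : k = 0
    · subst hk
      simp [Real.zero_rpow (by linarith : -r ≠ 0), Real.one_rpow]
    · have : (1:ℝ) ≤ |(k:ℝ)| := by
        rw [← Int.cast_abs]
        exact_mod_cast Int.one_le_abs (by omega)
      rw [max_eq_right this, if_neg hk]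
      simp



/-- The approximation target set for a single `q`. -/
def A (m n : ℕ) (v : ℝ) (q : Fin n → ℤ) : Set (Fin m → Fin n → ℝ) :=
  {Y | ∃ p : Fin m → ℤ, ‖(Matrix.of Y).mulVec (fun j => (q j : ℝ)) - fun i => (p i : ℝ)‖ <
      ‖((fun j => (q j : ℝ)) : Fin n → ℝ)‖ ^ (-v)}

def cube (m n : ℕ) (z : Fin m → Fin n → ℤ) : Set (Fin m → Fin n → ℝ) :=
  Set.univ.pi fun i => Set.univ.pi fun j => Set.Ico ((z i j : ℝ)) ((z i j : ℝ) + 1)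

lemma one_le_norm {n : ℕ} {q : Fin n → ℤ} (hq : q ≠ 0) :
    1 ≤ ‖((fun j => (q j : ℝ)) : Fin n → ℝ)‖ := by
  obtain ⟨j, hj⟩ : ∃ j, q j ≠ 0 := by
    by_contra h; push_neg at h; exact hq (funext fun j => h j)
  calc (1:ℝ) ≤ |(q j : ℝ)| := by
        rw [← Int.cast_abs]; exact_mod_cast Int.one_le_abs hj
  _ ≤ ‖((fun j => (q j : ℝ)) : Fin n → ℝ)‖ := by
      simpa [Real.norm_eq_abs] using norm_le_pi_norm ((fun j => (q j : ℝ)) : Fin n → ℝ) j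

lemma measure_A_le (m n : ℕ) (hm : 0 < m) (hn : 0 < n) {v : ℝ} (hv : (n:ℝ)/m < v)
    (z : Fin m → Fin n → ℤ) (q : Fin n → ℤ) :
    volume (A m n v q ∩ cube m n z) ≤
      (ENNReal.ofReal 10)^m *
        ∏ j, ENNReal.ofReal ((max 1 |(q j : ℝ)|) ^ (-(v * m)/n)) := by
  have hv0 : 0 < v := lt_of_le_of_lt (by positivity) hv
  by_cases hq : q = 0
  · subst hq
    have : A m n v (0 : Fin n → ℤ) = ∅ := by
      ext Y
      simp only [A, Set.mem_setOf_eq, Set.mem_empty_iff_false, iff_false]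
      rintro ⟨p, hp⟩
      have h0 : ‖((fun j => (((0 : Fin n → ℤ) j : ℝ))) : Fin n → ℝ)‖ = 0 := by
        simp [norm_eq_zero]
        rfl
      rw [h0, Real.zero_rpow (by linarith : -v ≠ 0)] at hp
      exact absurd hp (not_lt.mpr (norm_nonneg _))
    rw [this]
    simp
  · set N : ℝ := ‖((fun j => (q j : ℝ)) : Fin n → ℝ)‖ with hN
    have hN1 : 1 ≤ N := one_le_norm hq
    have hN0 : 0 < N := by linarith
    have hε : 0 < N ^ (-v) := Real.rpow_pos_of_pos hN0 _
    calc volume (A m n v q ∩ cube m n z) ≤ (ENNReal.ofReal (10 * N ^ (-v)))^m := by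
          have := cubeDim q hq z hε
          exact this
    _ = (ENNReal.ofReal 10)^m * (ENNReal.ofReal (N ^ (-v)))^m := by
          rw [ENNReal.ofReal_mul (by norm_num), mul_pow]
    _ ≤ (ENNReal.ofReal 10)^m *
          ∏ j, ENNReal.ofReal ((max 1 |(q j : ℝ)|) ^ (-(v * m)/n)) := by
        refine mul_le_mul_right ?_ _
        have e1 : (ENNReal.ofReal (N ^ (-v)))^m = ENNReal.ofReal ((N ^ (-v))^m) := by
          rw [← ENNReal.ofReal_pow (by positivity)]
        have e2 : (N ^ (-v))^m = N ^ (-(v * m)) := by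
          rw [← Real.rpow_natCast (N ^ (-v)) m, ← Real.rpow_mul hN0.le]
          ring_nf
        have e3 : ∀ j : Fin n, N ^ (-(v*m)/n) ≤ (max 1 |(q j : ℝ)|) ^ (-(v * m)/n) := by
          intro j
          apply Real.rpow_le_rpow_of_nonpos
          · positivity
          · apply max_le
            · exact hN1
            · simpa [Real.norm_eq_abs] using
                norm_le_pi_norm ((fun j => (q j : ℝ)) : Fin n → ℝ) j
          · apply div_nonpos_of_nonpos_of_nonneg
            · simp; positivity
            · positivity
        have e4 : N ^ (-(v*m)) ≤ ∏ j, (max 1 |(q j : ℝ)|) ^ (-(v * m)/n) := by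
          calc N ^ (-(v*m)) = ∏ _j : Fin n, N ^ (-(v*m)/n) := by
                rw [Finset.prod_const, ← Real.rpow_natCast (N ^ (-(v*m)/n)), ← Real.rpow_mul hN0.le]
                congr 1
                field_simp; simp
          _ ≤ ∏ j, (max 1 |(q j : ℝ)|) ^ (-(v * m)/n) :=
              Finset.prod_le_prod (fun j _ => by positivity) (fun j _ => e3 j)
        rw [e1, e2]
        calc ENNReal.ofReal (N ^ (-(v*m)))
            ≤ ENNReal.ofReal (∏ j, (max 1 |(q j : ℝ)|) ^ (-(v * m)/n)) :=
              ENNReal.ofReal_le_ofReal e4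
        _ = ∏ j, ENNReal.ofReal ((max 1 |(q j : ℝ)|) ^ (-(v * m)/n)) := by
              rw [ENNReal.ofReal_prod_of_nonneg (fun j _ => by positivity)]

lemma tsum_dom_ne_top (m n : ℕ) (hm : 0 < m) (hn : 0 < n) {v : ℝ} (hv : (n:ℝ)/m < v) :
    (∑' q : Fin n → ℤ, (ENNReal.ofReal 10)^m *
        ∏ j, ENNReal.ofReal ((max 1 |(q j : ℝ)|) ^ (-(v * m)/n))) ≠ ∞ := by
  have hr : 1 < (v * m) / n := by
    rw [lt_div_iff₀ (by exact_mod_cast hn)]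
    rw [div_lt_iff₀ (by exact_mod_cast hm)] at hv
    linarith
  have hsummable := summable_int_max ((v*m)/n) hr
  have h1 : ∀ q : Fin n → ℤ, ∀ j : Fin n,
      ENNReal.ofReal ((max 1 |(q j : ℝ)|) ^ (-(v * m)/n))
        = (fun k : ℤ => ENNReal.ofReal ((max 1 |(k : ℝ)|) ^ (-((v * m)/n)))) (q j) := by
    intro q j
    rw [neg_div]
  rw [ENNReal.tsum_mul_left]
  apply ENNReal.mul_ne_top
  · exact ENNReal.pow_ne_top ENNReal.ofReal_ne_top
  · simp_rw [h1]
    rw [tsum_pi_prod n (fun k : ℤ => ENNReal.ofReal ((max 1 |(k : ℝ)|) ^ (-((v * m)/n))))]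
    apply ENNReal.pow_ne_top
    rw [← ENNReal.ofReal_tsum_of_nonneg (fun k => by positivity) hsummable]
    exact ENNReal.ofReal_ne_top



def badSet (m n : ℕ) (v : ℝ) : Set (Fin m → Fin n → ℝ) :=
  {Y | {q : Fin n → ℤ | q ≠ 0 ∧ ∃ p : Fin m → ℤ,
      ‖(Matrix.of Y).mulVec (fun j => (q j : ℝ)) - fun i => (p i : ℝ)‖ <
        ‖((fun j => (q j : ℝ)) : Fin n → ℝ)‖ ^ (-v)}.Infinite}

lemma badSet_null (m n : ℕ) (hm : 0 < m) (hn : 0 < n) {v : ℝ} (hv : (n:ℝ)/m < v) :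
    volume (badSet m n v) = 0 := by
  have hcover : badSet m n v = ⋃ z : Fin m → Fin n → ℤ, badSet m n v ∩ cube m n z := by
    ext Y
    constructor
    · intro hY
      refine Set.mem_iUnion.2 ⟨fun i j => ⌊Y i j⌋, hY, ?_⟩
      intro i _ j _
      exact ⟨Int.floor_le _, Int.lt_floor_add_one _⟩
    · rintro hY
      obtain ⟨z, h1, _⟩ := Set.mem_iUnion.1 hY
      exact h1
  rw [hcover]
  refine measure_iUnion_null fun z => ?_
  have hmeas_cube : MeasurableSet (cube m n z) :=
    MeasurableSet.univ_pi fun i => MeasurableSet.univ_pi fun j => measurableSet_Ico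
  have hBC : ∀ᵐ Y ∂(volume.restrict (cube m n z)), {q : Fin n → ℤ | Y ∈ A m n v q}.Finite := by
    apply ae_finite_setOf_mem
    refine ne_top_of_le_ne_top (tsum_dom_ne_top m n hm hn hv) (ENNReal.tsum_le_tsum fun q => ?_)
    rw [Measure.restrict_apply' hmeas_cube]
    exact measure_A_le m n hm hn hv z q
  have h2 : ∀ᵐ Y ∂(volume.restrict (cube m n z)), Y ∉ badSet m n v := by
    filter_upwards [hBC] with Y hY
    intro hbad
    refine hbad (Set.Finite.subset hY ?_)
    intro q hq
    exact hq.2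
  have h3 : (volume.restrict (cube m n z)) (badSet m n v) = 0 := by
    have h4 := ae_iff.mp h2
    simpa [Set.setOf_mem_eq] using h4
  rwa [Measure.restrict_apply' hmeas_cube] at h3


lemma dirichlet_box (m n : ℕ) (Y : Matrix (Fin m) (Fin n) ℝ) (N Q : ℕ)
    (hQ1 : 1 ≤ Q) (hcard : Q^m < (N+1)^n) :
    ∃ q : Fin n → ℤ, q ≠ 0 ∧ (∀ j, |q j| ≤ (N:ℤ)) ∧
      ∃ p : Fin m → ℤ, ∀ i, |Y.mulVec (fun j => (q j : ℝ)) i - (p i : ℝ)| < 1/Q := by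
  classical
  have hQR : (0:ℝ) < Q := by exact_mod_cast hQ1
  set f : (Fin n → ℤ) → (Fin m → ℤ) :=
    fun q i => ⌊(Q:ℝ) * Int.fract (Y.mulVec (fun j => (q j : ℝ)) i)⌋ with hf
  have hmaps : ∀ q ∈ Fintype.piFinset (fun _ : Fin n => Finset.Icc (0:ℤ) N),
      f q ∈ Fintype.piFinset (fun _ : Fin m => Finset.Ico (0:ℤ) Q) := by
    intro q _
    rw [Fintype.mem_piFinset]
    intro i
    rw [Finset.mem_Ico]
    constructor
    · exact Int.floor_nonneg.mpr (mul_nonneg hQR.le (Int.fract_nonneg _))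
    · rw [Int.floor_lt]
      push_cast
      calc (Q:ℝ) * Int.fract (Y.mulVec (fun j => (q j : ℝ)) i) < (Q:ℝ) * 1 :=
            mul_lt_mul_of_pos_left (Int.fract_lt_one _) hQR
      _ = (Q:ℝ) := mul_one _
  have hcards : (Fintype.piFinset (fun _ : Fin m => Finset.Ico (0:ℤ) Q)).card <
      (Fintype.piFinset (fun _ : Fin n => Finset.Icc (0:ℤ) N)).card := by
    rw [Fintype.card_piFinset, Fintype.card_piFinset]
    have hIco : (Finset.Ico (0:ℤ) Q).card = Q := by
      rw [Int.card_Ico]; omega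
    have hIcc : (Finset.Icc (0:ℤ) (N:ℤ)).card = N + 1 := by
      rw [Int.card_Icc]; omega
    simp only [hIco, hIcc, Finset.prod_const, Finset.card_univ, Fintype.card_fin]
    exact hcard
  obtain ⟨a, ha, b, hb, hab, hfab⟩ :=
    Finset.exists_ne_map_eq_of_card_lt_of_maps_to hcards hmaps
  refine ⟨a - b, sub_ne_zero.mpr hab, ?_, ?_⟩
  · intro j
    have ha' := Fintype.mem_piFinset.mp ha j
    have hb' := Fintype.mem_piFinset.mp hb j
    rw [Finset.mem_Icc] at ha' hb'
    simp only [Pi.sub_apply]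
    rw [abs_le]
    omega
  · set u := Y.mulVec (fun j => ((a j : ℤ) : ℝ)) with hu
    set w := Y.mulVec (fun j => ((b j : ℤ) : ℝ)) with hw
    refine ⟨fun i => ⌊u i⌋ - ⌊w i⌋, fun i => ?_⟩
    have hmv : Y.mulVec (fun j => (((a - b) j : ℤ) : ℝ)) i = u i - w i := by
      have hfun : (fun j => (((a - b) j : ℤ) : ℝ))
          = (fun j => ((a j : ℤ):ℝ)) - (fun j => ((b j : ℤ):ℝ)) := by
        funext j; simp [Pi.sub_apply]
      rw [hfun, Matrix.mulVec_sub]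
      simp [hu, hw]
    have hfeq : f a i = f b i := congrFun hfab i
    have h1 : |(Q:ℝ) * Int.fract (u i) - (Q:ℝ) * Int.fract (w i)| < 1 :=
      floor_eq_abs_lt hfeq
    have h2 : |Int.fract (u i) - Int.fract (w i)| < 1/Q := by
      have e : (Q:ℝ) * Int.fract (u i) - (Q:ℝ) * Int.fract (w i)
          = (Q:ℝ) * (Int.fract (u i) - Int.fract (w i)) := by ring
      rw [e, abs_mul, abs_of_pos hQR] at h1
      rw [lt_div_iff₀ hQR]
      nlinarith [abs_nonneg (Int.fract (u i) - Int.fract (w i))]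
    rw [hmv]
    have e1 := Int.floor_add_fract (u i)
    have e2 := Int.floor_add_fract (w i)
    have e3 : u i - w i - ((⌊u i⌋ - ⌊w i⌋ : ℤ) : ℝ)
        = Int.fract (u i) - Int.fract (w i) := by push_cast; linarith
    rw [e3]
    exact h2


noncomputable def dst {m n : ℕ} (Y : Matrix (Fin m) (Fin n) ℝ) (q : Fin n → ℤ) : ℝ :=
  ‖Y.mulVec (fun j => (q j : ℝ)) - fun i => ((round (Y.mulVec (fun j => (q j : ℝ)) i) : ℤ) : ℝ)‖

lemma dst_le {m n : ℕ} (Y : Matrix (Fin m) (Fin n) ℝ) (q : Fin n → ℤ) (p : Fin m → ℤ) :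
    dst Y q ≤ ‖Y.mulVec (fun j => (q j : ℝ)) - fun i => (p i : ℝ)‖ := by
  set x := Y.mulVec (fun j => (q j : ℝ)) with hx
  rw [dst]
  apply pi_norm_le_iff_of_nonneg (norm_nonneg _) |>.mpr
  intro i
  have h1 : |x i - (round (x i) : ℝ)| ≤ |x i - (p i : ℝ)| := round_min (x i) (p i)
  have h2 : |x i - (p i : ℝ)| ≤ ‖x - fun i => (p i : ℝ)‖ := by
    simpa [Real.norm_eq_abs] using norm_le_pi_norm (x - fun i => (p i : ℝ)) i
  simp only [Pi.sub_apply, Real.norm_eq_abs]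
  exact le_trans h1 h2

lemma dirichlet_quant (m n : ℕ) (hm : 0 < m) (hn : 0 < n) (Y : Matrix (Fin m) (Fin n) ℝ)
    {v : ℝ} (hv0 : 0 < v) (hv : v < (n:ℝ)/m) {δ : ℝ} (hδ : 0 < δ) :
    ∃ q : Fin n → ℤ, q ≠ 0 ∧ dst Y q < δ ∧
      dst Y q < ‖((fun j => (q j : ℝ)) : Fin n → ℝ)‖ ^ (-v) := by
  set α := (n:ℝ)/m with hα
  have hα0 : 0 < α := by positivity
  have hαv : 0 < α - v := by linarith
  -- choose N
  have h1 : Filter.Tendsto (fun N : ℕ => (N:ℝ) ^ (α - v)) atTop atTop :=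
    (tendsto_rpow_atTop hαv).comp tendsto_natCast_atTop_atTop
  have h2 : Filter.Tendsto (fun N : ℕ => (N:ℝ) ^ α) atTop atTop :=
    (tendsto_rpow_atTop hα0).comp tendsto_natCast_atTop_atTop
  have h3 : ∀ᶠ N : ℕ in atTop, 2 ≤ (N:ℝ) ^ (α - v) ∧ (1/δ + 2) ≤ (N:ℝ) ^ α ∧ 1 ≤ N :=
    (h1.eventually_ge_atTop 2).and ((h2.eventually_ge_atTop (1/δ + 2)).and
      (eventually_ge_atTop 1))
  obtain ⟨N, hN1, hN2, hN3⟩ := h3.exists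
  have hNR : (1:ℝ) ≤ (N:ℝ) := by exact_mod_cast hN3
  have hNR0 : (0:ℝ) < N := by linarith
  set Q : ℕ := ⌊(N:ℝ) ^ α⌋₊ with hQ
  have hQlb : (N:ℝ) ^ α - 1 < (Q:ℝ) := Nat.sub_one_lt_floor _
  have hQub : (Q:ℝ) ≤ (N:ℝ) ^ α := Nat.floor_le (by positivity)
  have hQR1 : 1/δ + 1 ≤ (Q:ℝ) := by linarith
  have hQ1 : 1 ≤ Q := by
    have : (1:ℝ) ≤ (Q:ℝ) := by
      have : 0 < 1/δ := by positivity
      linarith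
    exact_mod_cast this
  have hQpos : (0:ℝ) < Q := by
    have := hQ1; positivity
  have hQv : (N:ℝ) ^ v ≤ (Q:ℝ) := by
    have e1 : (N:ℝ) ^ α = (N:ℝ) ^ v * (N:ℝ) ^ (α - v) := by
      rw [← Real.rpow_add hNR0]; ring_nf
    have e2 : (1:ℝ) ≤ (N:ℝ) ^ v := Real.one_le_rpow hNR hv0.le
    nlinarith
  have hcard : Q ^ m < (N+1) ^ n := by
    have e1 : ((Q:ℝ)) ^ m ≤ ((N:ℝ) ^ α) ^ m := pow_le_pow_left₀ hQpos.le hQub m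
    have e2 : ((N:ℝ) ^ α) ^ m = (N:ℝ) ^ (n:ℕ) := by
      rw [← Real.rpow_natCast ((N:ℝ) ^ α) m, ← Real.rpow_mul hNR0.le,
        ← Real.rpow_natCast (N:ℝ) n]
      congr 1
      rw [hα]; field_simp
    have e3 : Q ^ m ≤ N ^ n := by
      have : ((Q ^ m : ℕ) : ℝ) ≤ ((N ^ n : ℕ) : ℝ) := by push_cast; rw [← e2] at *; exact e1
      exact_mod_cast this
    have e4 : N ^ n < (N+1) ^ n := Nat.pow_lt_pow_left (by omega) (by omega)
    omega
  obtain ⟨q, hq0, hqN, p, hp⟩ := dirichlet_box m n Y N Q hQ1 hcard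
  have hqnorm1 : 1 ≤ ‖((fun j => (q j : ℝ)) : Fin n → ℝ)‖ := one_le_norm hq0
  have hqnormN : ‖((fun j => (q j : ℝ)) : Fin n → ℝ)‖ ≤ (N:ℝ) := by
    apply pi_norm_le_iff_of_nonneg (by positivity) |>.mpr
    intro j
    have := hqN j
    rw [Real.norm_eq_abs, ← Int.cast_abs]
    exact_mod_cast this
  have hdst : dst Y q < 1/(Q:ℝ) := by
    calc dst Y q ≤ ‖Y.mulVec (fun j => (q j : ℝ)) - fun i => (p i : ℝ)‖ := dst_le Y q p
    _ < 1/(Q:ℝ) := by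
        apply pi_norm_lt_iff (by positivity) |>.mpr
        intro i
        simpa [Real.norm_eq_abs] using hp i
  have hδQ : 1/(Q:ℝ) < δ := by
    rw [div_lt_iff₀ hQpos]
    have e : δ * (1/δ + 1) = 1 + δ := by field_simp
    nlinarith
  have hQN : 1/(Q:ℝ) ≤ (N:ℝ) ^ (-v) := by
    rw [Real.rpow_neg hNR0.le, ← one_div]
    apply one_div_le_one_div_of_le (Real.rpow_pos_of_pos hNR0 v) hQv
  have hNq : (N:ℝ) ^ (-v) ≤ ‖((fun j => (q j : ℝ)) : Fin n → ℝ)‖ ^ (-v) :=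
    Real.rpow_le_rpow_of_nonpos (by linarith) hqnormN (by linarith)
  exact ⟨q, hq0, lt_of_lt_of_le hdst (le_of_lt hδQ), lt_of_lt_of_le hdst (hQN.trans hNq)⟩

lemma approx_infinite (m n : ℕ) (hm : 0 < m) (hn : 0 < n) (Y : Matrix (Fin m) (Fin n) ℝ)
    {v : ℝ} (hv0 : 0 < v) (hv : v < (n:ℝ)/m) :
    {q : Fin n → ℤ | q ≠ 0 ∧ ∃ p : Fin m → ℤ,
      ‖Y.mulVec (fun j => (q j : ℝ)) - fun i => (p i : ℝ)‖ <
        ‖((fun j => (q j : ℝ)) : Fin n → ℝ)‖ ^ (-v)}.Infinite := by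
  set S := {q : Fin n → ℤ | q ≠ 0 ∧ ∃ p : Fin m → ℤ,
      ‖Y.mulVec (fun j => (q j : ℝ)) - fun i => (p i : ℝ)‖ <
        ‖((fun j => (q j : ℝ)) : Fin n → ℝ)‖ ^ (-v)} with hS
  by_contra hfin
  rw [Set.not_infinite] at hfin
  by_cases hint : ∃ q : Fin n → ℤ, q ≠ 0 ∧ dst Y q = 0
  · obtain ⟨q, hq0, hdst⟩ := hint
    obtain ⟨j0, hj0⟩ : ∃ j, q j ≠ 0 := by
      by_contra h; push_neg at h; exact hq0 (funext fun j => h j)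
    set x := Y.mulVec (fun j => (q j : ℝ)) with hx
    have hxint : x = fun i => ((round (x i) : ℤ) : ℝ) := by
      have := norm_eq_zero.mp hdst
      have h2 : x - (fun i => ((round (x i) : ℤ) : ℝ)) = 0 := this
      funext i
      have := congrFun h2 i
      simp only [Pi.sub_apply, Pi.zero_apply] at this
      linarith
    have hinj : Function.Injective (fun k : ℕ => (((k:ℤ)+1) • q : Fin n → ℤ)) := by
      intro k1 k2 h
      have h1 := congrFun h j0
      simp only [Pi.smul_apply, smul_eq_mul] at h1
      have : (k1:ℤ) = k2 := by
        have := mul_right_cancel₀ hj0 h1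
        omega
      exact_mod_cast this
    have hmem : ∀ k : ℕ, (((k:ℤ)+1) • q : Fin n → ℤ) ∈ S := by
      intro k
      have hk0 : (((k:ℤ)+1) • q : Fin n → ℤ) ≠ 0 := by
        intro h
        have := congrFun h j0
        simp only [Pi.smul_apply, smul_eq_mul, Pi.zero_apply] at this
        have : (k:ℤ) + 1 = 0 ∨ q j0 = 0 := mul_eq_zero.mp this
        rcases this with h' | h'
        · omega
        · exact hj0 h'
      refine ⟨hk0, fun i => ((k:ℤ)+1) * round (x i), ?_⟩
      have hscale : ((fun j => ((((k:ℤ)+1) • q : Fin n → ℤ) j : ℝ)) : Fin n → ℝ)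
          = ((k:ℝ)+1) • (fun j => (q j : ℝ)) := by
        funext j
        simp only [Pi.smul_apply, smul_eq_mul]
        push_cast
        ring
      have hmv : Y.mulVec (fun j => ((((k:ℤ)+1) • q : Fin n → ℤ) j : ℝ))
          = ((k:ℝ)+1) • x := by
        rw [hscale, Matrix.mulVec_smul]
      have hzero : Y.mulVec (fun j => ((((k:ℤ)+1) • q : Fin n → ℤ) j : ℝ))
          - (fun i => ((((k:ℤ)+1) * round (x i) : ℤ) : ℝ)) = 0 := by
        rw [hmv]
        funext i
        have hxi : x i = ((round (x i) : ℤ) : ℝ) := congrFun hxint i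
        simp only [Pi.sub_apply, Pi.smul_apply, smul_eq_mul, Pi.zero_apply]
        push_cast
        rw [← hxi]
        ring
      rw [hzero]
      simp only [norm_zero]
      apply Real.rpow_pos_of_pos
      have := one_le_norm hk0
      linarith
    exact (Set.infinite_of_injective_forall_mem hinj hmem) hfin
  · push_neg at hint
    classical
    set G : Finset ℝ := insert 1 (hfin.toFinset.image (dst Y)) with hG
    have hGne : G.Nonempty := Finset.insert_nonempty _ _
    set δ := G.min' hGne with hδdef
    have hδpos : 0 < δ := by
      rcases Finset.mem_insert.mp (G.min'_mem hGne) with h | h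
      · show (0:ℝ) < G.min' hGne
        rw [h]; norm_num
      · obtain ⟨q, hq, hq2⟩ := Finset.mem_image.mp h
        rw [Set.Finite.mem_toFinset] at hq
        have hq0 : q ≠ 0 := hq.1
        have := hint q hq0
        have hnn : 0 ≤ dst Y q := norm_nonneg _
        show (0:ℝ) < G.min' hGne
        rw [← hq2]
        exact lt_of_le_of_ne hnn (Ne.symm this)
    obtain ⟨q, hq0, hlt, hltv⟩ := dirichlet_quant m n hm hn Y hv0 hv hδpos
    have hqS : q ∈ S := ⟨hq0, fun i => round (Y.mulVec (fun j => (q j : ℝ)) i), hltv⟩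
    have hδle : δ ≤ dst Y q := by
      exact G.min'_le _ (Finset.mem_insert.mpr (Or.inr
        (Finset.mem_image.mpr ⟨q, Set.Finite.mem_toFinset hfin |>.mpr hqS, rfl⟩)))
    linarith


end AeOmega

/-- The Diophantine exponent of an `m × n` matrix `Y` (supremum norms):
the supremum of `v > 0` such that `dist(Yq, ℤ^m) < ‖q‖^{-v}` for infinitely many
nonzero `q ∈ ℤ^n`. -/
noncomputable def omegaSup (m n : ℕ) (Y : Matrix (Fin m) (Fin n) ℝ) : ℝ :=
  sSup {v : ℝ | 0 < v ∧
    {q : Fin n → ℤ | q ≠ 0 ∧ ∃ p : Fin m → ℤ,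
      ‖Y.mulVec (fun j => (q j : ℝ)) - fun i => (p i : ℝ)‖ <
        ‖((fun j => (q j : ℝ)) : Fin n → ℝ)‖ ^ (-v)}.Infinite}

/-- For Lebesgue almost every `m × n` real matrix `Y`, the Diophantine exponent
`ω(Y)` equals `n/m`. -/
theorem ae_omega_eq (m n : ℕ) (hm : 0 < m) (hn : 0 < n) :
    ∀ᵐ Y : Fin m → Fin n → ℝ, omegaSup m n (Matrix.of Y) = (n : ℝ) / m := by
  have hmn : 0 < (n:ℝ)/m := by positivity
  have hE : volume (⋃ k : ℕ, AeOmega.badSet m n ((n:ℝ)/m + ((k:ℝ)+1)⁻¹)) = 0 :=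
    measure_iUnion_null fun k =>
      AeOmega.badSet_null m n hm hn (lt_add_of_pos_right _ (by positivity))
  filter_upwards [measure_eq_zero_iff_ae_notMem.mp hE] with Y hY
  rw [omegaSup]
  set T := {v : ℝ | 0 < v ∧
    {q : Fin n → ℤ | q ≠ 0 ∧ ∃ p : Fin m → ℤ,
      ‖(Matrix.of Y).mulVec (fun j => (q j : ℝ)) - fun i => (p i : ℝ)‖ <
        ‖((fun j => (q j : ℝ)) : Fin n → ℝ)‖ ^ (-v)}.Infinite} with hT
  have hub : ∀ v ∈ T, v ≤ (n:ℝ)/m := by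
    rintro v ⟨hv0, hinf⟩
    by_contra hlt
    push_neg at hlt
    obtain ⟨k, hk⟩ := exists_nat_one_div_lt (show (0:ℝ) < v - (n:ℝ)/m by linarith)
    have hvk : (n:ℝ)/m + ((k:ℝ)+1)⁻¹ ≤ v := by
      rw [one_div] at hk
      linarith
    have hsub : {q : Fin n → ℤ | q ≠ 0 ∧ ∃ p : Fin m → ℤ,
        ‖(Matrix.of Y).mulVec (fun j => (q j : ℝ)) - fun i => (p i : ℝ)‖ <
          ‖((fun j => (q j : ℝ)) : Fin n → ℝ)‖ ^ (-v)} ⊆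
        {q : Fin n → ℤ | q ≠ 0 ∧ ∃ p : Fin m → ℤ,
        ‖(Matrix.of Y).mulVec (fun j => (q j : ℝ)) - fun i => (p i : ℝ)‖ <
          ‖((fun j => (q j : ℝ)) : Fin n → ℝ)‖ ^ (-((n:ℝ)/m + ((k:ℝ)+1)⁻¹))} := by
      rintro q ⟨hq0, p, hp⟩
      refine ⟨hq0, p, lt_of_lt_of_le hp ?_⟩
      exact Real.rpow_le_rpow_of_exponent_le (AeOmega.one_le_norm hq0) (by linarith)
    have hbad : Y ∈ AeOmega.badSet m n ((n:ℝ)/m + ((k:ℝ)+1)⁻¹) := hinf.mono hsub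
    exact hY (Set.mem_iUnion.2 ⟨k, hbad⟩)
  have hlb : ∀ v, 0 < v → v < (n:ℝ)/m → v ∈ T := fun v h1 h2 =>
    ⟨h1, AeOmega.approx_infinite m n hm hn (Matrix.of Y) h1 h2⟩
  apply le_antisymm
  · exact csSup_le ⟨(n:ℝ)/m/2, hlb _ (by positivity) (by linarith)⟩ hub
  · apply le_of_forall_lt
    intro c hc
    have h0 : (0:ℝ) ≤ max c 0 := le_max_right c 0
    have hw : max c 0 < (n:ℝ)/m := max_lt hc hmn
    set w := (max c 0 + (n:ℝ)/m)/2 with hwdef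
    have hw0 : 0 < w := by
      rw [hwdef]; linarith
    have hwlt : w < (n:ℝ)/m := by
      rw [hwdef]; linarith
    have hcw : c < w := by
      have := le_max_left c 0
      rw [hwdef]; linarith
    calc c < w := hcw
    _ ≤ sSup T := le_csSup ⟨(n:ℝ)/m, hub⟩ (hlb w hw0 hwlt)
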